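/- The four Hermitian forms on ℂ⁶ = ℂ³_z × ℂ³_{z'} given by H₁(z,z') = −i z₁·conj(z₂) + i z₂·conj(z₁), H₂(z,z') = −i z₂·conj(z₃) + i z₃·conj(z₂), H₃(z,z') = −i z₁·conj(z₃) + i z₃·conj(z₁), and H₄(z,z') = Σ_{j=1}^{3} ( z_j·conj(z'_j) + z'_j·conj(z_j) ) are linearly independent over ℝ, and their 6×6 Hermitian matrices have trivial common kernel: if v ∈ ℂ⁶ is annihilated by the matrix of each H_i, i = 1,…,4, then v = 0. Consequently the quadric in ℂ¹⁰ defined by Im w_i = H_i (i = 1,2,3) and Im w'₁ = H₄ is a generic (non-degenerate) quadric model of codimension 4. -/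

import Mathlib

open Matrix Complex

/-- Matrix of `H₁ = -i z₁ conj z₂ + i z₂ conj z₁` on `ℂ⁶ = ℂ³_z × ℂ³_{z'}`. -/
noncomputable def B1 : Matrix (Fin 6) (Fin 6) ℂ :=
  !![0,-I,0,0,0,0; I,0,0,0,0,0; 0,0,0,0,0,0; 0,0,0,0,0,0; 0,0,0,0,0,0; 0,0,0,0,0,0]

/-- Matrix of `H₂ = -i z₂ conj z₃ + i z₃ conj z₂`. -/
noncomputable def B2 : Matrix (Fin 6) (Fin 6) ℂ :=
  !![0,0,0,0,0,0; 0,0,-I,0,0,0; 0,I,0,0,0,0; 0,0,0,0,0,0; 0,0,0,0,0,0; 0,0,0,0,0,0]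

/-- Matrix of `H₃ = -i z₁ conj z₃ + i z₃ conj z₁`. -/
noncomputable def B3 : Matrix (Fin 6) (Fin 6) ℂ :=
  !![0,0,-I,0,0,0; 0,0,0,0,0,0; I,0,0,0,0,0; 0,0,0,0,0,0; 0,0,0,0,0,0; 0,0,0,0,0,0]

/-- Matrix of `H₄ = Σ_j (z_j conj z'_j + z'_j conj z_j)`, i.e. `[[0, I₃],[I₃, 0]]`. -/
noncomputable def B4 : Matrix (Fin 6) (Fin 6) ℂ :=
  !![0,0,0,1,0,0; 0,0,0,0,1,0; 0,0,0,0,0,1; 1,0,0,0,0,0; 0,1,0,0,0,0; 0,0,1,0,0,0]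


/-- The four Hermitian forms `H₁, …, H₄` on `ℂ⁶` are linearly independent over `ℝ` and their
matrices have trivial common kernel: the codimension-4 quadric in `ℂ¹⁰` defined by
`Im wᵢ = Hᵢ` (`i = 1,2,3`) and `Im w'₁ = H₄` is a generic (non-degenerate) quadric model. -/
theorem codim4_model_nondegenerate :
    (∀ c : Fin 4 → ℝ, c 0 • B1 + c 1 • B2 + c 2 • B3 + c 3 • B4 = 0 → c = 0) ∧
    (∀ v : Fin 6 → ℂ,
      B1 *ᵥ v = 0 → B2 *ᵥ v = 0 → B3 *ᵥ v = 0 → B4 *ᵥ v = 0 → v = 0) := by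
  constructor
  · intro c h
    have h01 := congrFun (congrFun h 0) 1
    have h12 := congrFun (congrFun h 1) 2
    have h02 := congrFun (congrFun h 0) 2
    have h03 := congrFun (congrFun h 0) 3
    simp [B1, B2, B3, B4, Matrix.add_apply, Matrix.smul_apply, Complex.ext_iff]
      at h01 h12 h02 h03
    funext i
    fin_cases i <;> simp [h01, h12, h02, h03]
  · intro v _ _ _ h4
    simp [B4, Matrix.cons_mulVec, Matrix.cons_dotProduct, Matrix.dotProduct_of_isEmpty,
      Matrix.empty_mulVec, Matrix.cons_eq_zero_iff] at h4
    obtain ⟨h3, h4', h5, h0, h1, h2⟩ := h4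
    funext i
    fin_cases i
    exacts [h0, h1, h2, h3, h4', h5]
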